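/- Let D be an integral domain and * a star operation on D such that D is *-sharp. Then I_v is *-invertible for each nonzero ideal I of D. -/

import Mathlib

open scoped nonZeroDivisors

/-- A star operation on an integral domain `D` with quotient field `K`: a map
`I ↦ I*` on (nonzero) fractional ideals such that `D* = D`, `(aI)* = a·I*`,
`I ⊆ I*`, `I ⊆ J → I* ⊆ J*` and `(I*)* = I*`. (The value at `0` is irrelevant.) -/
structure StarOperation (D K : Type*) [CommRing D] [IsDomain D] [Field K]
    [Algebra D K] [IsFractionRing D K] where
  star : FractionalIdeal D⁰ K → FractionalIdeal D⁰ K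
  star_one : star 1 = 1
  star_smul : ∀ (a : K), a ≠ 0 → ∀ I : FractionalIdeal D⁰ K, I ≠ 0 →
    star (FractionalIdeal.spanSingleton D⁰ a * I) = FractionalIdeal.spanSingleton D⁰ a * star I
  le_star : ∀ I : FractionalIdeal D⁰ K, I ≠ 0 → I ≤ star I
  star_mono : ∀ I J : FractionalIdeal D⁰ K, I ≠ 0 → J ≠ 0 → I ≤ J → star I ≤ star J
  star_star : ∀ I : FractionalIdeal D⁰ K, I ≠ 0 → star (star I) = star I

section StarSharpDefs

variable {D K : Type*} [CommRing D] [IsDomain D] [Field K] [Algebra D K] [IsFractionRing D K]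

/-- `D` is sharp with respect to the operation `star` ("`*`-sharp"): whenever
`I ⊇ A·B` for nonzero ideals `I, A, B` of `D`, there exist nonzero ideals `H, J`
with `I* = (HJ)*`, `H* ⊇ A` and `J* ⊇ B`. -/
def IsSharpOp (star : FractionalIdeal D⁰ K → FractionalIdeal D⁰ K) : Prop :=
  ∀ I A B : Ideal D, I ≠ 0 → A ≠ 0 → B ≠ 0 → A * B ≤ I →
    ∃ H J : Ideal D, H ≠ 0 ∧ J ≠ 0 ∧
      star (I : FractionalIdeal D⁰ K) =
        star ((H : FractionalIdeal D⁰ K) * (J : FractionalIdeal D⁰ K)) ∧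
      (A : FractionalIdeal D⁰ K) ≤ star (H : FractionalIdeal D⁰ K) ∧
      (B : FractionalIdeal D⁰ K) ≤ star (J : FractionalIdeal D⁰ K)

/-- `D` is `*`-sharp for the star operation `s`. -/
def StarOperation.IsSharp (s : StarOperation D K) : Prop :=
  IsSharpOp s.star

lemma inv_ne_zero' {I : FractionalIdeal D⁰ K} (hI : I ≠ 0) : I⁻¹ ≠ 0 := by
  obtain ⟨d, hd, hdI⟩ := I.isFractional
  have hmem : algebraMap D K d ∈ I⁻¹ := by
    rw [FractionalIdeal.mem_inv_iff hI]
    intro y hy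
    obtain ⟨c, hc⟩ := hdI y hy
    refine ⟨c, trivial, ?_⟩
    simpa [Algebra.smul_def] using hc
  intro h0
  rw [h0] at hmem
  have : algebraMap D K d ≠ 0 :=
    IsFractionRing.to_map_ne_zero_of_mem_nonZeroDivisors hd
  exact this (by simpa using hmem)

/-- The `v`-operation `I ↦ I_v = (I⁻¹)⁻¹`. -/
noncomputable def vOp (I : FractionalIdeal D⁰ K) : FractionalIdeal D⁰ K := (I⁻¹)⁻¹

lemma vOp_mono {I J : FractionalIdeal D⁰ K} (h : I ≤ J) : vOp I ≤ vOp J := by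
  rcases eq_or_ne I 0 with rfl | hI
  · show ((0 : FractionalIdeal D⁰ K)⁻¹)⁻¹ ≤ vOp J
    rw [FractionalIdeal.inv_zero', FractionalIdeal.inv_zero']
    exact FractionalIdeal.zero_le _
  have hJ : J ≠ 0 := fun hJ0 => hI (le_antisymm (hJ0 ▸ h) (FractionalIdeal.zero_le I))
  exact FractionalIdeal.inv_anti_mono (inv_ne_zero' hJ) (inv_ne_zero' hI)
    (FractionalIdeal.inv_anti_mono hI hJ h)

end StarSharpDefs

section MyHelpers

set_option linter.unusedSectionVars false

variable {D K : Type*} [CommRing D] [IsDomain D] [Field K] [Algebra D K] [IsFractionRing D K]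

open FractionalIdeal

theorem FractionalIdeal.mul_left_mono (I : FractionalIdeal D⁰ K) : Monotone (I * ·) :=
  fun _ _ h => mul_le_mul' le_rfl h

theorem FractionalIdeal.mul_right_mono (I : FractionalIdeal D⁰ K) : Monotone fun J => J * I :=
  fun _ _ h => mul_le_mul' h le_rfl

lemma exists_ne_zero_mem' {I : FractionalIdeal D⁰ K} (hI : I ≠ 0) : ∃ x ∈ I, x ≠ (0 : K) := by
  by_contra h
  push_neg at h
  exact hI (FractionalIdeal.eq_zero_iff.mpr h)

lemma frac_mul_ne_zero {I J : FractionalIdeal D⁰ K} (hI : I ≠ 0) (hJ : J ≠ 0) : I * J ≠ 0 := by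
  obtain ⟨x, hx, hx0⟩ := exists_ne_zero_mem' hI
  obtain ⟨y, hy, hy0⟩ := exists_ne_zero_mem' hJ
  intro h
  have : x * y ∈ I * J := FractionalIdeal.mul_mem_mul hx hy
  rw [h] at this
  exact mul_ne_zero hx0 hy0 (by simpa using this)

lemma ne_zero_of_le' {I J : FractionalIdeal D⁰ K} (hI : I ≠ 0) (h : I ≤ J) : J ≠ 0 :=
  fun h0 => hI (le_antisymm (h0 ▸ h) (FractionalIdeal.zero_le I))

lemma sstar_ne_zero (s : StarOperation D K) {I : FractionalIdeal D⁰ K} (hI : I ≠ 0) :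
    s.star I ≠ 0 := ne_zero_of_le' hI (s.le_star I hI)

lemma frac_mul_inv_le_one {I : FractionalIdeal D⁰ K} (hI : I ≠ 0) : I * I⁻¹ ≤ 1 :=
  FractionalIdeal.mul_le.mpr fun x hx y hy =>
    mul_comm x y ▸ (FractionalIdeal.mem_inv_iff hI).mp hy x hx

lemma mul_star_le (s : StarOperation D K) {I J : FractionalIdeal D⁰ K} (hI : I ≠ 0) (hJ : J ≠ 0) :
    I * s.star J ≤ s.star (I * J) := by
  rw [FractionalIdeal.mul_le]
  intro i hi j hj
  rcases eq_or_ne i 0 with rfl | hi0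
  · simpa using (s.star (I * J)).zero_mem
  have h1 : i * j ∈ spanSingleton D⁰ i * s.star J :=
    FractionalIdeal.mem_singleton_mul.mpr ⟨j, hj, rfl⟩
  rw [← s.star_smul i hi0 J hJ] at h1
  have h3 : spanSingleton D⁰ i * J ≤ I * J :=
    FractionalIdeal.mul_right_mono J (FractionalIdeal.spanSingleton_le_iff_mem.mpr hi)
  exact s.star_mono _ _ (frac_mul_ne_zero (FractionalIdeal.spanSingleton_ne_zero_iff.mpr hi0) hJ)
    (frac_mul_ne_zero hI hJ) h3 h1

lemma star_spanSingleton (s : StarOperation D K) {x : K} (hx : x ≠ 0) :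
    s.star (FractionalIdeal.spanSingleton D⁰ x) = FractionalIdeal.spanSingleton D⁰ x := by
  have := s.star_smul x hx 1 one_ne_zero
  rwa [mul_one, s.star_one, mul_one] at this

lemma le_vOp' {I : FractionalIdeal D⁰ K} (hI : I ≠ 0) : I ≤ vOp I := by
  rw [vOp, FractionalIdeal.inv_eq]
  exact (FractionalIdeal.le_div_iff_mul_le (inv_ne_zero' hI)).mpr (frac_mul_inv_le_one hI)

lemma inv_vOp {I : FractionalIdeal D⁰ K} (hI : I ≠ 0) : (vOp I)⁻¹ = I⁻¹ := by
  apply le_antisymm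
  · exact FractionalIdeal.inv_anti_mono hI
      (ne_zero_of_le' hI (le_vOp' hI)) (le_vOp' hI)
  · exact le_vOp' (inv_ne_zero' hI)

end MyHelpers

/-- Let `*` be a star operation on `D` such that `D` is `*`-sharp.
Then `I_v` is `*`-invertible for each nonzero ideal `I` of `D`. -/
theorem statement4 (D : Type*) [CommRing D] [IsDomain D]
    (K : Type*) [Field K] [Algebra D K] [IsFractionRing D K]
    (s : StarOperation D K) (hsharp : s.IsSharp) :
    ∀ I : Ideal D, I ≠ 0 →
      s.star (vOp (I : FractionalIdeal D⁰ K) * (vOp (I : FractionalIdeal D⁰ K))⁻¹) = 1 := by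
  intro I hI0
  classical
  set cI : FractionalIdeal D⁰ K := (I : FractionalIdeal D⁰ K) with hcI
  have hIne : cI ≠ 0 := FractionalIdeal.coeIdeal_ne_zero.mpr hI0
  obtain ⟨a, haI, ha0⟩ := Submodule.exists_mem_ne_zero_of_ne_bot hI0
  set α : K := algebraMap D K a with hαdef
  have hα : α ≠ 0 :=
    (map_ne_zero_iff (algebraMap D K) (IsFractionRing.injective D K)).mpr ha0
  have hspan_coe : ((Ideal.span {a} : Ideal D) : FractionalIdeal D⁰ K) =
      FractionalIdeal.spanSingleton D⁰ α := FractionalIdeal.coeIdeal_span_singleton a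
  have hspan_ne : (Ideal.span {a} : Ideal D) ≠ 0 := by
    simpa [Ideal.span_singleton_eq_bot] using ha0
  have hαmem : α ∈ cI := by
    rw [hcI, FractionalIdeal.mem_coeIdeal]
    exact ⟨a, haI, rfl⟩
  have hIinv_ne : cI⁻¹ ≠ 0 := inv_ne_zero' hIne
  have hspanS_ne : FractionalIdeal.spanSingleton D⁰ α ≠ 0 :=
    FractionalIdeal.spanSingleton_ne_zero_iff.mpr hα
  have hII : cI * cI⁻¹ ≤ 1 := frac_mul_inv_le_one hIne
  have hBle : FractionalIdeal.spanSingleton D⁰ α * cI⁻¹ ≤ 1 :=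
    le_trans (FractionalIdeal.mul_right_mono cI⁻¹
      (FractionalIdeal.spanSingleton_le_iff_mem.mpr hαmem)) hII
  obtain ⟨B, hB⟩ := FractionalIdeal.le_one_iff_exists_coeIdeal.mp hBle
  have hBfrac_ne : (B : FractionalIdeal D⁰ K) ≠ 0 := by
    rw [hB]; exact frac_mul_ne_zero hspanS_ne hIinv_ne
  have hB0 : B ≠ 0 := FractionalIdeal.coeIdeal_ne_zero.mp hBfrac_ne
  have hmul : I * B ≤ Ideal.span {a} := by
    rw [← FractionalIdeal.coeIdeal_le_coeIdeal K, FractionalIdeal.coeIdeal_mul, hB, hspan_coe]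
    calc cI * (FractionalIdeal.spanSingleton D⁰ α * cI⁻¹)
        = FractionalIdeal.spanSingleton D⁰ α * (cI * cI⁻¹) := by ring
      _ ≤ FractionalIdeal.spanSingleton D⁰ α * 1 :=
          FractionalIdeal.mul_left_mono _ hII
      _ = FractionalIdeal.spanSingleton D⁰ α := mul_one _
  obtain ⟨H, J, hH0, hJ0, hstar_eq, hAle, hBle'⟩ := hsharp (Ideal.span {a}) I B hspan_ne hI0 hB0 hmul
  have hHne : (H : FractionalIdeal D⁰ K) ≠ 0 := FractionalIdeal.coeIdeal_ne_zero.mpr hH0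
  have hJne : (J : FractionalIdeal D⁰ K) ≠ 0 := FractionalIdeal.coeIdeal_ne_zero.mpr hJ0
  have hHJne : (H : FractionalIdeal D⁰ K) * (J : FractionalIdeal D⁰ K) ≠ 0 :=
    frac_mul_ne_zero hHne hJne
  have hHJ : s.star ((H : FractionalIdeal D⁰ K) * (J : FractionalIdeal D⁰ K)) =
      FractionalIdeal.spanSingleton D⁰ α := by
    rw [← hstar_eq, hspan_coe, star_spanSingleton s hα]
  -- Step 1 : cI * J ≤ spanSingleton α
  have hIJ : cI * (J : FractionalIdeal D⁰ K) ≤ FractionalIdeal.spanSingleton D⁰ α := by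
    calc cI * (J : FractionalIdeal D⁰ K)
        ≤ s.star (H : FractionalIdeal D⁰ K) * (J : FractionalIdeal D⁰ K) :=
          FractionalIdeal.mul_right_mono _ hAle
      _ = (J : FractionalIdeal D⁰ K) * s.star (H : FractionalIdeal D⁰ K) := mul_comm _ _
      _ ≤ s.star ((J : FractionalIdeal D⁰ K) * (H : FractionalIdeal D⁰ K)) :=
          mul_star_le s hJne hHne
      _ = s.star ((H : FractionalIdeal D⁰ K) * (J : FractionalIdeal D⁰ K)) := by rw [mul_comm]
      _ = FractionalIdeal.spanSingleton D⁰ α := hHJ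
  -- Step 2 : J ≤ spanSingleton α * cI⁻¹
  have hJinvle : FractionalIdeal.spanSingleton D⁰ α⁻¹ * (J : FractionalIdeal D⁰ K) ≤ cI⁻¹ := by
    rw [FractionalIdeal.inv_eq]
    refine (FractionalIdeal.le_div_iff_mul_le hIne).mpr ?_
    calc (FractionalIdeal.spanSingleton D⁰ α⁻¹ * (J : FractionalIdeal D⁰ K)) * cI
        = FractionalIdeal.spanSingleton D⁰ α⁻¹ * (cI * (J : FractionalIdeal D⁰ K)) := by ring
      _ ≤ FractionalIdeal.spanSingleton D⁰ α⁻¹ * FractionalIdeal.spanSingleton D⁰ α :=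
          FractionalIdeal.mul_left_mono _ hIJ
      _ = 1 := by
          rw [FractionalIdeal.spanSingleton_mul_spanSingleton, inv_mul_cancel₀ hα,
            FractionalIdeal.spanSingleton_one]
  have hJle : (J : FractionalIdeal D⁰ K) ≤ FractionalIdeal.spanSingleton D⁰ α * cI⁻¹ := by
    have h := FractionalIdeal.mul_left_mono (FractionalIdeal.spanSingleton D⁰ α) hJinvle
    dsimp only at h
    rwa [← mul_assoc, FractionalIdeal.spanSingleton_mul_spanSingleton, mul_inv_cancel₀ hα,
      FractionalIdeal.spanSingleton_one, one_mul] at h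
  -- Step 3 : H ≤ I_v
  have hHmul : (H : FractionalIdeal D⁰ K) * (FractionalIdeal.spanSingleton D⁰ α * cI⁻¹) ≤
      FractionalIdeal.spanSingleton D⁰ α := by
    calc (H : FractionalIdeal D⁰ K) * (FractionalIdeal.spanSingleton D⁰ α * cI⁻¹)
        = (H : FractionalIdeal D⁰ K) * (B : FractionalIdeal D⁰ K) := by rw [hB]
      _ ≤ (H : FractionalIdeal D⁰ K) * s.star (J : FractionalIdeal D⁰ K) :=
          FractionalIdeal.mul_left_mono _ hBle'
      _ ≤ s.star ((H : FractionalIdeal D⁰ K) * (J : FractionalIdeal D⁰ K)) :=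
          mul_star_le s hHne hJne
      _ = FractionalIdeal.spanSingleton D⁰ α := hHJ
  have hHinv : (H : FractionalIdeal D⁰ K) * cI⁻¹ ≤ 1 := by
    have h := FractionalIdeal.mul_left_mono (FractionalIdeal.spanSingleton D⁰ α⁻¹) hHmul
    dsimp only at h
    rw [FractionalIdeal.spanSingleton_mul_spanSingleton, inv_mul_cancel₀ hα,
      FractionalIdeal.spanSingleton_one] at h
    calc (H : FractionalIdeal D⁰ K) * cI⁻¹
        = FractionalIdeal.spanSingleton D⁰ α⁻¹ *
          ((H : FractionalIdeal D⁰ K) * (FractionalIdeal.spanSingleton D⁰ α * cI⁻¹)) := by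
          rw [show FractionalIdeal.spanSingleton D⁰ α⁻¹ *
            ((H : FractionalIdeal D⁰ K) * (FractionalIdeal.spanSingleton D⁰ α * cI⁻¹)) =
            (FractionalIdeal.spanSingleton D⁰ α⁻¹ * FractionalIdeal.spanSingleton D⁰ α) *
            ((H : FractionalIdeal D⁰ K) * cI⁻¹) by ring,
            FractionalIdeal.spanSingleton_mul_spanSingleton, inv_mul_cancel₀ hα,
            FractionalIdeal.spanSingleton_one, one_mul]
      _ ≤ 1 := h
  have hHle : (H : FractionalIdeal D⁰ K) ≤ vOp cI := by
    rw [vOp, FractionalIdeal.inv_eq]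
    exact (FractionalIdeal.le_div_iff_mul_le hIinv_ne).mpr hHinv
  -- Conclusion
  rw [show (vOp cI)⁻¹ = cI⁻¹ from inv_vOp hIne]
  have hvne : vOp cI ≠ 0 := ne_zero_of_le' hIne (le_vOp' hIne)
  have hprod_ne : vOp cI * cI⁻¹ ≠ 0 := frac_mul_ne_zero hvne hIinv_ne
  have hub : vOp cI * cI⁻¹ ≤ 1 := by
    rw [mul_comm]
    exact frac_mul_inv_le_one hIinv_ne
  have hlow : FractionalIdeal.spanSingleton D⁰ α⁻¹ *
      ((H : FractionalIdeal D⁰ K) * (J : FractionalIdeal D⁰ K)) ≤ vOp cI * cI⁻¹ := by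
    have h1 : (H : FractionalIdeal D⁰ K) * (J : FractionalIdeal D⁰ K) ≤
        vOp cI * (FractionalIdeal.spanSingleton D⁰ α * cI⁻¹) :=
      le_trans (FractionalIdeal.mul_right_mono _ hHle) (FractionalIdeal.mul_left_mono _ hJle)
    have h2 := FractionalIdeal.mul_left_mono (FractionalIdeal.spanSingleton D⁰ α⁻¹) h1
    dsimp only at h2
    calc FractionalIdeal.spanSingleton D⁰ α⁻¹ *
          ((H : FractionalIdeal D⁰ K) * (J : FractionalIdeal D⁰ K))
        ≤ FractionalIdeal.spanSingleton D⁰ α⁻¹ *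
          (vOp cI * (FractionalIdeal.spanSingleton D⁰ α * cI⁻¹)) := h2
      _ = (FractionalIdeal.spanSingleton D⁰ α⁻¹ * FractionalIdeal.spanSingleton D⁰ α) *
          (vOp cI * cI⁻¹) := by ring
      _ = vOp cI * cI⁻¹ := by
          rw [FractionalIdeal.spanSingleton_mul_spanSingleton, inv_mul_cancel₀ hα,
            FractionalIdeal.spanSingleton_one, one_mul]
  have hlow_ne : FractionalIdeal.spanSingleton D⁰ α⁻¹ *
      ((H : FractionalIdeal D⁰ K) * (J : FractionalIdeal D⁰ K)) ≠ 0 :=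
    frac_mul_ne_zero (FractionalIdeal.spanSingleton_ne_zero_iff.mpr (inv_ne_zero hα)) hHJne
  have hstar_low : s.star (FractionalIdeal.spanSingleton D⁰ α⁻¹ *
      ((H : FractionalIdeal D⁰ K) * (J : FractionalIdeal D⁰ K))) = 1 := by
    rw [s.star_smul α⁻¹ (inv_ne_zero hα) _ hHJne, hHJ,
      FractionalIdeal.spanSingleton_mul_spanSingleton, inv_mul_cancel₀ hα,
      FractionalIdeal.spanSingleton_one]
  apply le_antisymm
  · have := s.star_mono _ _ hprod_ne one_ne_zero hub
    rwa [s.star_one] at this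
  · have := s.star_mono _ _ hlow_ne hprod_ne hlow
    rwa [hstar_low] at this
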